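/- For the sequence defined by x_0 = x_1 = 1 and x_{n+2} x_n = 3 x_{n+1}^3, every term is x_n = 3^{s_n} where s_n = ((5−√5)/10)·((3+√5)/2)^n + ((5+√5)/10)·((3−√5)/2)^n − 1; equivalently, (s_n) satisfies s_0 = s_1 = 0 and s_{n+2} = 3 s_{n+1} − s_n + 1. -/

import Mathlib

theorem stmt8 (x s : ℕ → ℕ) (hx0 : x 0 = 1) (hx1 : x 1 = 1)
    (hrec : ∀ n, x (n + 2) * x n = 3 * x (n + 1) ^ 3)
    (hs0 : s 0 = 0) (hs1 : s 1 = 0)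
    (hsrec : ∀ n, s (n + 2) + s n = 3 * s (n + 1) + 1) :
    ∀ n, x n = 3 ^ s n ∧
      (s n : ℝ) = (5 - Real.sqrt 5) / 10 * ((3 + Real.sqrt 5) / 2) ^ n
        + (5 + Real.sqrt 5) / 10 * ((3 - Real.sqrt 5) / 2) ^ n - 1 := by
  have h5 : Real.sqrt 5 ^ 2 = 5 := Real.sq_sqrt (by norm_num)
  -- part 1
  have hxp : ∀ n, x n = 3 ^ s n ∧ x (n + 1) = 3 ^ s (n + 1) := by
    intro n
    induction n with
    | zero => simp [hx0, hx1, hs0, hs1]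
    | succ k ih =>
      refine ⟨ih.2, ?_⟩
      have h1 := hrec k
      rw [ih.1, ih.2] at h1
      have h2 : x (k + 2) * 3 ^ s k = 3 ^ s (k + 2) * 3 ^ s k := by
        calc x (k + 2) * 3 ^ s k = 3 * (3 ^ s (k + 1)) ^ 3 := h1
          _ = 3 ^ (3 * s (k + 1) + 1) := by rw [← pow_mul, pow_succ, Nat.mul_comm (s (k+1)) 3]; ring
          _ = 3 ^ (s (k + 2) + s k) := by rw [← hsrec k]
          _ = 3 ^ s (k + 2) * 3 ^ s k := pow_add 3 _ _
      exact Nat.eq_of_mul_eq_mul_right (Nat.pow_pos (by norm_num)) h2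
  -- part 2
  have hsf : ∀ n, ((s n : ℝ) = (5 - Real.sqrt 5) / 10 * ((3 + Real.sqrt 5) / 2) ^ n
        + (5 + Real.sqrt 5) / 10 * ((3 - Real.sqrt 5) / 2) ^ n - 1) ∧
      ((s (n + 1) : ℝ) = (5 - Real.sqrt 5) / 10 * ((3 + Real.sqrt 5) / 2) ^ (n + 1)
        + (5 + Real.sqrt 5) / 10 * ((3 - Real.sqrt 5) / 2) ^ (n + 1) - 1) := by
    intro n
    induction n with
    | zero =>
      constructor
      · simp [hs0]; nlinarith [h5]
      · simp [hs1]; nlinarith [h5]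
    | succ k ih =>
      refine ⟨ih.2, ?_⟩
      have h1 : (s (k + 2) : ℝ) = 3 * (s (k + 1) : ℝ) - (s k : ℝ) + 1 := by
        have h := hsrec k
        have h' : (s (k + 2) : ℝ) + s k = 3 * s (k + 1) + 1 := by exact_mod_cast h
        linarith
      have ha2 : ((3 + Real.sqrt 5) / 2) ^ 2 = 3 * ((3 + Real.sqrt 5) / 2) - 1 := by
        nlinarith [h5]
      have hb2 : ((3 - Real.sqrt 5) / 2) ^ 2 = 3 * ((3 - Real.sqrt 5) / 2) - 1 := by
        nlinarith [h5]
      have ea : ((3 + Real.sqrt 5) / 2) ^ (k + 2)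
          = 3 * ((3 + Real.sqrt 5) / 2) ^ (k + 1) - ((3 + Real.sqrt 5) / 2) ^ k := by
        calc ((3 + Real.sqrt 5) / 2) ^ (k + 2)
            = ((3 + Real.sqrt 5) / 2) ^ k * ((3 + Real.sqrt 5) / 2) ^ 2 := by ring
          _ = _ := by rw [ha2]; ring
      have eb : ((3 - Real.sqrt 5) / 2) ^ (k + 2)
          = 3 * ((3 - Real.sqrt 5) / 2) ^ (k + 1) - ((3 - Real.sqrt 5) / 2) ^ k := by
        calc ((3 - Real.sqrt 5) / 2) ^ (k + 2)
            = ((3 - Real.sqrt 5) / 2) ^ k * ((3 - Real.sqrt 5) / 2) ^ 2 := by ring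
          _ = _ := by rw [hb2]; ring
      rw [h1, ih.1, ih.2]
      linear_combination ((5 - Real.sqrt 5) / 10) * ea + ((5 + Real.sqrt 5) / 10) * eb
        + (-(((3 + Real.sqrt 5) / 2) ^ k) / 4 - (((3 - Real.sqrt 5) / 2) ^ k) / 4
          + Real.sqrt 5 * ((((3 + Real.sqrt 5) / 2) ^ k) - (((3 - Real.sqrt 5) / 2) ^ k)) / 20) * h5
  exact fun n => ⟨(hxp n).1, (hsf n).1⟩
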